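/- Let (Ω, F, P) be a probability space, let 𝕐 be a standard Borel space, let n ≥ 1 and m ≥ 1 and k = n + m, and let Y : Ω → 𝕐^k be measurable with law mutually absolutely continuous with ν^k (the k-fold product of a probability measure ν on 𝕐). Let ς : Ω → Sym(k) be a random permutation of {1,…,k}, independent of Y, such that P(ς = id) > 0 and P(ς = (i j)) > 0 for every transposition (i j). Define Z : Ω → 𝕐^k by Z(ω)_i = Y(ω)_{ς(ω)(i)}. If f : 𝕐^n → ℝ is measurable, f(Y₁,…,Yₙ) is integrable, and f(Y₁,…,Yₙ) is P-almost surely equal to its conditional expectation E[f(Y₁,…,Yₙ) | σ(Z)] given the σ-algebra generated by Z, then f(Y₁,…,Yₙ) is P-almost surely constant. -/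

import Mathlib

open MeasureTheory ProbabilityTheory

section Aux

variable {𝕐 : Type*} [MeasurableSpace 𝕐] {k : ℕ} (ν : Measure 𝕐) [IsProbabilityMeasure ν]

lemma measurePreserving_comp_perm (τ : Equiv.Perm (Fin k)) :
    MeasurePreserving (fun y : Fin k → 𝕐 => y ∘ τ)
      (Measure.pi fun _ => ν) (Measure.pi fun _ => ν) := by
  have hmeas : Measurable (fun y : Fin k → 𝕐 => y ∘ τ) :=
    measurable_pi_lambda _ fun i => measurable_pi_apply (τ i)
  refine ⟨hmeas, ?_⟩
  refine (Measure.pi_eq fun s hs => ?_).symm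
  rw [Measure.map_apply hmeas (MeasurableSet.univ_pi hs)]
  have hpre : (fun y : Fin k → 𝕐 => y ∘ τ) ⁻¹' Set.pi Set.univ s
      = Set.pi Set.univ (fun j => s (τ.symm j)) := by
    ext y
    simp only [Set.mem_preimage, Set.mem_pi, Set.mem_univ, true_implies, Function.comp_apply]
    constructor
    · intro h j
      simpa using h (τ.symm j)
    · intro h i
      simpa using h (τ i)
  rw [hpre, Measure.pi_pi]
  exact Equiv.prod_comp τ.symm fun i => ν (s i)

lemma measurePreserving_update_coord (a : Fin k) :
    MeasurePreserving (fun p : (Fin k → 𝕐) × 𝕐 => Function.update p.1 a p.2)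
      ((Measure.pi fun _ => ν).prod ν) (Measure.pi fun _ => ν) := by
  have hmeas : Measurable (fun p : (Fin k → 𝕐) × 𝕐 => Function.update p.1 a p.2) :=
    measurable_update'
  refine ⟨hmeas, ?_⟩
  refine (Measure.pi_eq fun s hs => ?_).symm
  rw [Measure.map_apply hmeas (MeasurableSet.univ_pi hs)]
  have hpre : (fun p : (Fin k → 𝕐) × 𝕐 => Function.update p.1 a p.2) ⁻¹' Set.pi Set.univ s
      = (Set.pi Set.univ (Function.update s a Set.univ)) ×ˢ (s a) := by
    ext p
    simp only [Set.mem_preimage, Set.mem_pi, Set.mem_univ, true_implies, Set.mem_prod]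
    constructor
    · intro h
      refine ⟨fun i => ?_, by simpa using h a⟩
      by_cases hia : i = a
      · subst hia; simp
      · have := h i
        rw [Function.update_of_ne hia] at this
        rw [Function.update_of_ne hia]
        exact this
    · rintro ⟨h1, h2⟩ i
      by_cases hia : i = a
      · subst hia; simpa using h2
      · have := h1 i
        rw [Function.update_of_ne hia] at this ⊢
        exact this
  rw [hpre, Measure.prod_prod, Measure.pi_pi]
  have h1 : (∏ i, ν (Function.update s a Set.univ i))
      = ∏ i ∈ Finset.univ.erase a, ν (s i) := by
    rw [← Finset.prod_erase_mul _ _ (Finset.mem_univ a)]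
    simp only [Function.update_self, measure_univ, mul_one]
    exact Finset.prod_congr rfl fun i hi =>
      congrArg ν (Function.update_of_ne (Finset.ne_of_mem_erase hi) _ _)
  rw [h1, ← Finset.prod_erase_mul _ _ (Finset.mem_univ a)]

lemma fubini_coord (a : Fin k) (φ : 𝕐 → (Fin k → 𝕐) → ℝ)
    (hφa : ∀ t s y, φ t (Function.update y a s) = φ t y)
    (B : (Fin k → 𝕐) → ℝ)
    (hBa : ∀ s y, B (Function.update y a s) = B y)
    (hae : (fun y => φ (y a) y) =ᵐ[Measure.pi fun _ => ν] B) :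
    (fun y => ∫ t, φ t y ∂ν) =ᵐ[Measure.pi fun _ => ν] B := by
  set μ : Measure (Fin k → 𝕐) := Measure.pi fun _ => ν with hμ
  have hprod : (fun p : (Fin k → 𝕐) × 𝕐 => φ p.2 p.1)
      =ᵐ[μ.prod ν] fun p => B p.1 := by
    have h0 : ∀ᵐ y ∂μ, φ (y a) y = B y := hae
    have h1 : ∀ᵐ p ∂(μ.prod ν),
        φ ((Function.update p.1 a p.2) a) (Function.update p.1 a p.2)
          = B (Function.update p.1 a p.2) :=
      (measurePreserving_update_coord ν a).quasiMeasurePreserving.ae h0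
    filter_upwards [h1] with p hp
    rw [Function.update_self] at hp
    rwa [hφa, hBa] at hp
  have h2 : ∀ᵐ y ∂μ, ∀ᵐ t ∂ν, φ t y = B y := Measure.ae_ae_of_ae_prod hprod
  filter_upwards [h2] with y hy
  rw [integral_congr_ae hy, integral_const]
  simp

variable (n m : ℕ)

/-- Iterated integration of the coordinates `n-1, n-2, …` of a function of the
first `n` coordinates. -/
noncomputable def permW (h : 0 < n + m) (f : (Fin n → 𝕐) → ℝ) :
    ℕ → (Fin (n + m) → 𝕐) → ℝ
  | 0 => fun y => f fun i => y (Fin.castAdd m i)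
  | (j+1) => fun y => ∫ t, permW h f j (Function.update y ⟨n-1-j, by omega⟩ t) ∂ν

lemma permW_measurable (h : 0 < n + m) {f : (Fin n → 𝕐) → ℝ} (hf : Measurable f) :
    ∀ j, Measurable (permW ν n m h f j) := by
  intro j
  induction j with
  | zero =>
      exact hf.comp (measurable_pi_lambda _ fun i => measurable_pi_apply _)
  | succ j ih =>
      show Measurable fun y => ∫ t, permW ν n m h f j
        (Function.update y ⟨n-1-j, by omega⟩ t) ∂ν
      have hsm : StronglyMeasurable fun p : (Fin (n+m) → 𝕐) × 𝕐 =>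
          permW ν n m h f j (Function.update p.1 ⟨n-1-j, by omega⟩ p.2) :=
        (ih.comp measurable_update').stronglyMeasurable
      exact hsm.integral_prod_right'.measurable

lemma permW_congr (h : 0 < n + m) (f : (Fin n → 𝕐) → ℝ) :
    ∀ j (y₁ y₂ : Fin (n + m) → 𝕐),
      (∀ i : Fin (n + m), (i : ℕ) < n - j → y₁ i = y₂ i) →
      permW ν n m h f j y₁ = permW ν n m h f j y₂ := by
  intro j
  induction j with
  | zero =>
      intro y₁ y₂ hy
      show f _ = f _
      refine congrArg f (funext fun i => ?_)
      exact hy _ (by simpa using i.isLt)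
  | succ j ih =>
      intro y₁ y₂ hy
      show (∫ t, permW ν n m h f j (Function.update y₁ ⟨n-1-j, by omega⟩ t) ∂ν)
        = ∫ t, permW ν n m h f j (Function.update y₂ ⟨n-1-j, by omega⟩ t) ∂ν
      refine integral_congr_ae (Filter.Eventually.of_forall fun t => ?_)
      refine ih _ _ fun i hi => ?_
      by_cases hia : i = (⟨n-1-j, by omega⟩ : Fin (n + m))
      · rw [hia]; simp
      · rw [Function.update_of_ne hia, Function.update_of_ne hia]
        refine hy i ?_
        have hne : (i : ℕ) ≠ n - 1 - j := fun hcon => hia (Fin.ext hcon)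
        omega

end Aux

/-- Random-permutation lemma: let `Y : Ω → 𝕐^(n+m)` have a law mutually absolutely
continuous with `ν^(n+m)`, and let `ς` be an independent random permutation whose law
charges the identity and every transposition.  If an integrable function `f` of the
first `n` coordinates of `Y` equals a.s. its conditional expectation given the
permuted vector `Z ω = Y ω ∘ ς ω`, then it is a.s. constant. -/
theorem const_of_condexp_randomPermutation
    {Ω 𝕐 : Type*} [F : MeasurableSpace Ω] [MeasurableSpace 𝕐] [StandardBorelSpace 𝕐]
    (P : Measure Ω) [IsProbabilityMeasure P]
    (n m : ℕ) (hn : 1 ≤ n) (hm : 1 ≤ m)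
    (ν : Measure 𝕐) [IsProbabilityMeasure ν]
    (Y : Ω → Fin (n + m) → 𝕐) (hY : Measurable Y)
    (hac₁ : Measure.map Y P ≪ Measure.pi fun _ : Fin (n + m) => ν)
    (hac₂ : (Measure.pi fun _ : Fin (n + m) => ν) ≪ Measure.map Y P)
    (ς : Ω → Equiv.Perm (Fin (n + m)))
    (hindep : Indep (MeasurableSpace.comap ς ⊤) (MeasurableSpace.comap Y inferInstance) P)
    (hid : 0 < P {ω | ς ω = Equiv.refl (Fin (n + m))})
    (hswap : ∀ i j : Fin (n + m), i ≠ j → 0 < P {ω | ς ω = Equiv.swap i j})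
    (f : (Fin n → 𝕐) → ℝ) (hf : Measurable f)
    (hint : Integrable (fun ω => f fun i => Y ω (Fin.castAdd m i)) P)
    (hfix : (fun ω => f fun i => Y ω (Fin.castAdd m i)) =ᵐ[P]
      P[(fun ω => f fun i => Y ω (Fin.castAdd m i)) |
        MeasurableSpace.comap (fun ω (i : Fin (n + m)) => Y ω (ς ω i)) inferInstance]) :
    ∃ c : ℝ, (fun ω => f fun i => Y ω (Fin.castAdd m i)) =ᵐ[P] fun _ => c := by
  by_cases hle : MeasurableSpace.comap (fun ω (i : Fin (n + m)) => Y ω (ς ω i))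
      inferInstance ≤ F
  swap
  · rw [condExp_of_not_le hle] at hfix
    exact ⟨0, hfix⟩
  set Z : Ω → (Fin (n + m) → 𝕐) := fun ω i => Y ω (ς ω i) with hZdef
  have hZ : Measurable Z := measurable_iff_comap_le.mpr hle
  set g : Ω → ℝ := fun ω => f fun i => Y ω (Fin.castAdd m i) with hgdef
  have hg : Measurable g :=
    hf.comp (measurable_pi_lambda _ fun i => (measurable_pi_apply _).comp hY)
  have hcd : P[g | MeasurableSpace.comap Z inferInstance]
      =ᵐ[P] fun a => ∫ y, y ∂condDistrib g Z P (Z a) :=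
    condExp_ae_eq_integral_condDistrib' hZ hint
  have hH : AEStronglyMeasurable (fun x => ∫ y, y ∂condDistrib g Z P x) (Measure.map Z P) := by
    have := MeasureTheory.AEStronglyMeasurable.integral_condDistrib_map
      (μ := P) (X := Z) (Y := g) (mβ := inferInstance) hg.aemeasurable
      (f := fun p : (Fin (n + m) → 𝕐) × ℝ => p.2) measurable_snd.aestronglyMeasurable
    exact this
  set h : (Fin (n + m) → 𝕐) → ℝ := hH.mk _ with hhdef
  have hmeas_h : Measurable h := hH.stronglyMeasurable_mk.measurable
  have hcomp : (fun ω => ∫ y, y ∂condDistrib g Z P (Z ω)) =ᵐ[P] fun ω => h (Z ω) :=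
    ae_eq_comp hZ.aemeasurable hH.ae_eq_mk
  have hgh : g =ᵐ[P] fun ω => h (Z ω) := hfix.trans (hcd.trans hcomp)
  set μ : Measure (Fin (n + m) → 𝕐) := Measure.pi fun _ => ν with hμdef
  have hfm : Measurable fun y : Fin (n + m) → 𝕐 => f fun i => y (Fin.castAdd m i) :=
    hf.comp (measurable_pi_lambda _ fun i => measurable_pi_apply _)
  have key : ∀ π : Equiv.Perm (Fin (n + m)), 0 < P {ω | ς ω = π} →
      (fun y : Fin (n + m) → 𝕐 => f fun i => y (Fin.castAdd m i))
        =ᵐ[μ] fun y => h fun i => y (π i) := by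
    intro π hπ
    have hhm' : Measurable fun y : Fin (n + m) → 𝕐 => h fun i => y (π i) :=
      hmeas_h.comp (measurable_pi_lambda _ fun i => measurable_pi_apply _)
    set S : Set (Fin (n + m) → 𝕐) :=
      {y | ¬ f (fun i => y (Fin.castAdd m i)) = h fun i => y (π i)} with hSdef
    have hS : MeasurableSet S := (measurableSet_eq_fun hfm hhm').compl
    have hmemY : MeasurableSet[MeasurableSpace.comap Y inferInstance] (Y ⁻¹' S) := ⟨S, hS, rfl⟩
    have hmemς : MeasurableSet[MeasurableSpace.comap ς ⊤] {ω | ς ω = π} :=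
      ⟨{π}, trivial, rfl⟩
    have hind := ((ProbabilityTheory.Indep_iff _ _ P).mp hindep) _ _ hmemς hmemY
    have hnull : P ({ω | ς ω = π} ∩ Y ⁻¹' S) = 0 := by
      refine measure_mono_null ?_ (ae_iff.mp hgh)
      rintro ω ⟨hω1, hω2⟩
      simp only [Set.mem_setOf_eq] at hω1 hω2 ⊢
      intro hcon
      apply hω2
      have : Z ω = fun i => Y ω (π i) := by rw [hZdef]; simp [hω1]
      rw [this] at hcon
      exact hcon
    rw [hind] at hnull
    have hPY : P (Y ⁻¹' S) = 0 := by
      rcases mul_eq_zero.mp hnull with h0 | h0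
      · exact absurd h0 hπ.ne'
      · exact h0
    have hmapS : Measure.map Y P S = 0 := by
      rw [Measure.map_apply hY hS]; exact hPY
    have hμS : μ S = 0 := hac₂ hmapS
    rw [Filter.eventuallyEq_iff_exists_mem]
    exact ⟨Sᶜ, by rwa [mem_ae_iff, compl_compl], fun y hy => not_not.mp hy⟩
  have hpos : 0 < n + m := by omega
  have hid' : (fun y : Fin (n + m) → 𝕐 => f fun i => y (Fin.castAdd m i)) =ᵐ[μ] h := by
    have := key (Equiv.refl _) hid
    simpa using this
  have hE : ∀ j, j ≤ n → permW ν n m hpos f j =ᵐ[μ] h := by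
    intro j
    induction j with
    | zero => intro _; exact hid'
    | succ j ih =>
      intro hj1
      have hj : j ≤ n := Nat.le_of_succ_le hj1
      have hWj : permW ν n m hpos f j =ᵐ[μ] h := ih hj
      set a : Fin (n + m) := ⟨n - 1 - j, by omega⟩ with hadef
      set b : Fin (n + m) := ⟨n - j, by omega⟩ with hbdef
      have hab : a ≠ b := by
        intro hcon
        have := congrArg Fin.val hcon
        simp only [hadef, hbdef] at this
        omega
      have hswapkey := key (Equiv.swap a b) (hswap a b hab)
      have hsw : (fun y : Fin (n + m) → 𝕐 => h fun i => y (Equiv.swap a b i)) =ᵐ[μ] h :=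
        hswapkey.symm.trans hid'
      set B : (Fin (n + m) → 𝕐) → ℝ :=
        fun y => permW ν n m hpos f j (Function.update y a (y b)) with hBdef
      have hBsw : ∀ y, B y = permW ν n m hpos f j (fun i => y (Equiv.swap a b i)) := by
        intro y
        apply permW_congr
        intro i hi
        by_cases hia : i = a
        · rw [hia]
          simp [Equiv.swap_apply_left]
        · have hib : i ≠ b := by
            intro hcon
            rw [hcon] at hi
            simp only [hbdef] at hi
            omega
          rw [Function.update_of_ne hia, Equiv.swap_apply_of_ne_of_ne hia hib]
      have hBh : B =ᵐ[μ] h := by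
        have h2 : (fun y : Fin (n + m) → 𝕐 => permW ν n m hpos f j (fun i => y (Equiv.swap a b i)))
            =ᵐ[μ] fun y => h fun i => y (Equiv.swap a b i) := by
          have h0 : ∀ᵐ y ∂μ, permW ν n m hpos f j y = h y := hWj
          exact (measurePreserving_comp_perm ν (Equiv.swap a b)).quasiMeasurePreserving.ae h0
        have hBeq : B = fun y => permW ν n m hpos f j (fun i => y (Equiv.swap a b i)) :=
          funext hBsw
        rw [hBeq]
        exact h2.trans hsw
      have hae : (fun y : Fin (n + m) → 𝕐 =>
          (fun t y' => permW ν n m hpos f j (Function.update y' a t)) (y a) y) =ᵐ[μ] B := by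
        have heq : (fun y : Fin (n + m) → 𝕐 =>
            permW ν n m hpos f j (Function.update y a (y a))) = permW ν n m hpos f j :=
          funext fun y => by rw [Function.update_eq_self]
        show (fun y : Fin (n + m) → 𝕐 =>
            permW ν n m hpos f j (Function.update y a (y a))) =ᵐ[μ] B
        rw [heq]
        exact hWj.trans hBh.symm
      have hfub := fubini_coord ν a
        (fun t y' => permW ν n m hpos f j (Function.update y' a t))
        (fun t s y => by
          show permW ν n m hpos f j (Function.update (Function.update y a s) a t)
            = permW ν n m hpos f j (Function.update y a t)
          rw [Function.update_idem])
        B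
        (fun s y => by
          show permW ν n m hpos f j
              (Function.update (Function.update y a s) a ((Function.update y a s) b))
            = permW ν n m hpos f j (Function.update y a (y b))
          rw [Function.update_idem, Function.update_of_ne (Ne.symm hab)])
        hae
      have hWsucc : permW ν n m hpos f (j+1)
          = fun y => ∫ t, permW ν n m hpos f j (Function.update y a t) ∂ν := rfl
      rw [hWsucc]
      exact hfub.trans hBh
  have hW0 : permW ν n m hpos f 0 =ᵐ[μ] h := hE 0 (Nat.zero_le n)
  have hWn : permW ν n m hpos f n =ᵐ[μ] h := hE n le_rfl
  have hne : Nonempty 𝕐 := by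
    by_contra hcon
    have h1 := measure_univ (μ := ν)
    rw [Set.univ_eq_empty_iff.mpr (not_nonempty_iff.mp hcon)] at h1
    simp at h1
  set y0 : Fin (n + m) → 𝕐 := fun _ => Classical.arbitrary 𝕐 with hy0def
  set c : ℝ := permW ν n m hpos f n y0 with hcdef
  have hconst : ∀ y, permW ν n m hpos f n y = c := fun y =>
    permW_congr ν n m hpos f n y y0 (fun i hi => absurd hi (by omega))
  have hμc : (fun y : Fin (n + m) → 𝕐 => f fun i => y (Fin.castAdd m i)) =ᵐ[μ] fun _ => c := by
    refine (hW0.trans hWn.symm).trans ?_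
    exact Filter.Eventually.of_forall hconst
  have hSc : MeasurableSet {y : Fin (n + m) → 𝕐 | ¬ f (fun i => y (Fin.castAdd m i)) = c} :=
    (measurableSet_eq_fun hfm measurable_const).compl
  have hμ0 : μ {y : Fin (n + m) → 𝕐 | ¬ f (fun i => y (Fin.castAdd m i)) = c} = 0 :=
    ae_iff.mp hμc
  have hmap0 : Measure.map Y P {y : Fin (n + m) → 𝕐 | ¬ f (fun i => y (Fin.castAdd m i)) = c} = 0 :=
    hac₁ hμ0
  refine ⟨c, ?_⟩
  have : P {ω | ¬ g ω = c} = 0 := by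
    have hpre : {ω | ¬ g ω = c}
        = Y ⁻¹' {y : Fin (n + m) → 𝕐 | ¬ f (fun i => y (Fin.castAdd m i)) = c} := rfl
    rw [hpre, ← Measure.map_apply hY hSc]
    exact hmap0
  exact ae_iff.mpr this
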